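/- arXiv:1001.5415 — 2 statements merged into one kernel-verified Lean document; each statement's English description precedes it below -/
import Mathlib

section
/- Let $\nu$ be a Borel probability measure on $\mathbb{R}$ with finite first moment, $f_0(\xi) = \nu((\xi,+\infty))$, $u_0 = \int_{\mathbb{R}}(f_0(\xi) - \mathbf{1}_{0>\xi})\,d\xi$, and $f(t,\xi) = e^{-t} f_0(\xi) + (1-e^{-t})\mathbf{1}_{u_0>\xi}$. Then for all $t \geq 0$ and $\xi \in \mathbb{R}$, $m(t,\xi) := \int_{-\infty}^{\xi} \left( \mathbf{1}_{u_0 > \zeta} - f(t,\zeta) \right) d\zeta \geq 0$. -/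
open MeasureTheory Set Real

-- measurability of the tail function
lemma tail_meas (ν : Measure ℝ) [IsProbabilityMeasure ν] :
    Measurable (fun ζ : ℝ => (ν (Ioi ζ)).toReal) := by
  have h : Antitone (fun ζ : ℝ => (ν (Ioi ζ)).toReal) := by
    intro a b hab
    apply ENNReal.toReal_mono (measure_ne_top ν _)
    exact measure_mono (Ioi_subset_Ioi hab)
  exact h.measurable

-- tail integrable on Ioi 0
lemma tail_int (ν : Measure ℝ) [IsProbabilityMeasure ν] (hmom : Integrable (fun ξ : ℝ => |ξ|) ν) :
    IntegrableOn (fun ζ : ℝ => (ν (Ioi ζ)).toReal) (Ioi 0) := by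
  refine ⟨(tail_meas ν).aestronglyMeasurable.restrict, ?_⟩
  rw [hasFiniteIntegral_iff_ofReal]
  · have key := lintegral_eq_lintegral_meas_lt ν (f := fun x => max x 0)
      (Filter.Eventually.of_forall fun x => le_max_right _ _)
      (measurable_id.max measurable_const).aemeasurable
    have h1 : ∫⁻ t in Ioi (0:ℝ), ν {a : ℝ | t < max a 0} = ∫⁻ t in Ioi (0:ℝ), ν (Ioi t) := by
      apply setLIntegral_congr_fun_ae measurableSet_Ioi
      exact Filter.Eventually.of_forall fun t ht => by
        congr 1; ext a; simp only [mem_setOf_eq, mem_Ioi, lt_max_iff]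
        constructor
        · rintro (h | h); exact h; exact absurd h (not_lt.mpr ht.le)
        · exact fun h => Or.inl h
    have h2 : ∫⁻ x, ENNReal.ofReal (max x 0) ∂ν < ⊤ := by
      calc ∫⁻ x, ENNReal.ofReal (max x 0) ∂ν ≤ ∫⁻ x, ENNReal.ofReal |x| ∂ν := by
            apply lintegral_mono fun x => ENNReal.ofReal_le_ofReal ?_
            exact max_le (le_abs_self x) (abs_nonneg x)
        _ < ⊤ := hmom.lintegral_lt_top
    have h3 : ∫⁻ ζ in Ioi (0:ℝ), ENNReal.ofReal ((ν (Ioi ζ)).toReal) = ∫⁻ ζ in Ioi (0:ℝ), ν (Ioi ζ) := by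
      apply lintegral_congr fun ζ => ?_
      rw [ENNReal.ofReal_toReal (measure_ne_top ν _)]
    rw [h3, ← h1, ← key]; exact h2
  · exact Filter.Eventually.of_forall fun ζ => ENNReal.toReal_nonneg

lemma cdf_meas (ν : Measure ℝ) [IsProbabilityMeasure ν] :
    Measurable (fun ζ : ℝ => (ν (Iic ζ)).toReal) := by
  have h : Monotone (fun ζ : ℝ => (ν (Iic ζ)).toReal) := by
    intro a b hab
    exact ENNReal.toReal_mono (measure_ne_top ν _) (measure_mono (Iic_subset_Iic.mpr hab))
  exact h.measurable

lemma cdf_int (ν : Measure ℝ) [IsProbabilityMeasure ν] (hmom : Integrable (fun ξ : ℝ => |ξ|) ν) :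
    IntegrableOn (fun ζ : ℝ => (ν (Iic ζ)).toReal) (Iio 0) := by
  have base : IntegrableOn (fun t : ℝ => (ν (Iic (-t))).toReal) (Ioi 0) := by
    refine ⟨((cdf_meas ν).comp measurable_neg).aestronglyMeasurable.restrict, ?_⟩
    rw [hasFiniteIntegral_iff_ofReal (Filter.Eventually.of_forall fun ζ => ENNReal.toReal_nonneg)]
    have key := lintegral_eq_lintegral_meas_le ν (f := fun x => max (-x) 0)
      (Filter.Eventually.of_forall fun x => le_max_right _ _)
      (measurable_neg.max measurable_const).aemeasurable
    have h1 : ∫⁻ t in Ioi (0:ℝ), ν {a : ℝ | t ≤ max (-a) 0} = ∫⁻ t in Ioi (0:ℝ), ν (Iic (-t)) := by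
      apply setLIntegral_congr_fun_ae measurableSet_Ioi
      exact Filter.Eventually.of_forall fun t ht => by
        congr 1; ext a; simp only [mem_setOf_eq, mem_Iic, le_max_iff]
        constructor
        · rintro (h | h)
          · linarith
          · exact absurd h (not_le.mpr ht)
        · intro h; left; linarith
    have h2 : ∫⁻ x, ENNReal.ofReal (max (-x) 0) ∂ν < ⊤ := by
      calc ∫⁻ x, ENNReal.ofReal (max (-x) 0) ∂ν ≤ ∫⁻ x, ENNReal.ofReal |x| ∂ν := by
            apply lintegral_mono fun x => ENNReal.ofReal_le_ofReal ?_
            exact max_le (neg_le_abs x) (abs_nonneg x)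
        _ < ⊤ := hmom.lintegral_lt_top
    have h3 : ∫⁻ t in Ioi (0:ℝ), ENNReal.ofReal ((ν (Iic (-t))).toReal)
        = ∫⁻ t in Ioi (0:ℝ), ν (Iic (-t)) :=
      lintegral_congr fun t => by rw [ENNReal.ofReal_toReal (measure_ne_top ν _)]
    rw [h3, ← h1, ← key]; exact h2
  have h := ((Measure.measurePreserving_neg (volume : Measure ℝ)).integrableOn_comp_preimage
      (Homeomorph.neg ℝ).measurableEmbedding (f := fun ζ : ℝ => (ν (Iic ζ)).toReal)
      (s := Iio 0)).mp
  apply h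
  simpa [Function.comp_def, neg_Iio] using base

lemma h_int (ν : Measure ℝ) [IsProbabilityMeasure ν] (hmom : Integrable (fun ξ : ℝ => |ξ|) ν) :
    Integrable (fun ζ : ℝ => (ν (Ioi ζ)).toReal - if (0:ℝ) > ζ then 1 else 0) := by
  rw [← integrableOn_univ, ← @Iio_union_Ici _ _ (0 : ℝ), integrableOn_union]
  constructor
  · apply IntegrableOn.congr_fun (f := fun ζ : ℝ => -(ν (Iic ζ)).toReal)
    · exact (cdf_int ν hmom).neg
    · intro ζ hζ
      have h1 : (0:ℝ) > ζ := hζ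
      simp only [h1, if_true]
      have hsum : ν (Iic ζ) + ν (Ioi ζ) = 1 := by
        rw [← measure_union (Iic_disjoint_Ioi le_rfl) measurableSet_Ioi, Iic_union_Ioi,
          measure_univ]
      have h2 : (ν (Iic ζ)).toReal + (ν (Ioi ζ)).toReal = 1 := by
        rw [← ENNReal.toReal_add (measure_ne_top ν _) (measure_ne_top ν _), hsum]; simp
      linarith
    · exact measurableSet_Iio
  · apply IntegrableOn.congr_fun (f := fun ζ : ℝ => (ν (Ioi ζ)).toReal)
    · rw [integrableOn_Ici_iff_integrableOn_Ioi]; exact tail_int ν hmom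
    · intro ζ hζ
      have h1 : ¬ ((0:ℝ) > ζ) := not_lt.mpr hζ
      simp only [h1, if_false]; ring
    · exact measurableSet_Ici

lemma step_eq_pos (u₀ : ℝ) (h0 : 0 ≤ u₀) :
    (fun ζ : ℝ => (if u₀ > ζ then (1:ℝ) else 0) - (if (0:ℝ) > ζ then 1 else 0))
      = (Ico (0:ℝ) u₀).indicator (fun _ => (1:ℝ)) := by
  funext ζ
  by_cases h1 : (0:ℝ) > ζ
  · rw [if_pos (lt_of_lt_of_le h1 h0), if_pos h1,
      indicator_of_notMem (fun hm => absurd (mem_Ico.mp hm).1 (not_le.mpr h1))]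
    ring
  · rw [if_neg h1]
    by_cases h2 : u₀ > ζ
    · rw [if_pos h2, indicator_of_mem (mem_Ico.mpr ⟨not_lt.mp h1, h2⟩)]; ring
    · rw [if_neg h2, indicator_of_notMem (fun hm => absurd (mem_Ico.mp hm).2 h2)]; ring

lemma step_eq_neg (u₀ : ℝ) (h0 : u₀ ≤ 0) :
    (fun ζ : ℝ => (if u₀ > ζ then (1:ℝ) else 0) - (if (0:ℝ) > ζ then 1 else 0))
      = (Ico u₀ (0:ℝ)).indicator (fun _ => (-1:ℝ)) := by
  funext ζ
  by_cases h2 : u₀ > ζ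
  · rw [if_pos h2, if_pos (lt_of_lt_of_le h2 h0),
      indicator_of_notMem (fun hm => absurd (mem_Ico.mp hm).1 (not_le.mpr h2))]
    ring
  · rw [if_neg h2]
    by_cases h1 : (0:ℝ) > ζ
    · rw [if_pos h1, indicator_of_mem (mem_Ico.mpr ⟨not_lt.mp h2, h1⟩)]; ring
    · rw [if_neg h1, indicator_of_notMem (fun hm => absurd (mem_Ico.mp hm).2 h1)]; ring

lemma step_int (u₀ : ℝ) :
    Integrable (fun ζ : ℝ => (if u₀ > ζ then (1:ℝ) else 0) - (if (0:ℝ) > ζ then 1 else 0)) := by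
  rcases le_total 0 u₀ with h0 | h0
  · rw [step_eq_pos u₀ h0, integrable_indicator_iff measurableSet_Ico]
    exact (integrableOn_const_iff).mpr (Or.inr (by rw [Real.volume_Ico]; exact ENNReal.ofReal_lt_top))
  · rw [step_eq_neg u₀ h0, integrable_indicator_iff measurableSet_Ico]
    exact (integrableOn_const_iff).mpr (Or.inr (by rw [Real.volume_Ico]; exact ENNReal.ofReal_lt_top))

lemma step_integral (u₀ : ℝ) :
    ∫ ζ : ℝ, ((if u₀ > ζ then (1:ℝ) else 0) - (if (0:ℝ) > ζ then 1 else 0)) = u₀ := by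
  rcases le_total 0 u₀ with h0 | h0
  · rw [step_eq_pos u₀ h0, integral_indicator measurableSet_Ico]
    simp only [integral_const, MeasurableSet.univ, Measure.restrict_apply, univ_inter,
      Real.volume_Ico, smul_eq_mul]
    rw [Measure.real, Measure.restrict_apply MeasurableSet.univ, univ_inter, Real.volume_Ico]
    rw [ENNReal.toReal_ofReal (by linarith : (0:ℝ) ≤ u₀ - 0)]
    ring
  · rw [step_eq_neg u₀ h0, integral_indicator measurableSet_Ico]
    simp only [integral_const, MeasurableSet.univ, Measure.restrict_apply, univ_inter,
      Real.volume_Ico, smul_eq_mul]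
    rw [Measure.real, Measure.restrict_apply MeasurableSet.univ, univ_inter, Real.volume_Ico]
    rw [ENNReal.toReal_ofReal (by linarith : (0:ℝ) ≤ 0 - u₀)]
    ring

/-- nonnegativity of the collapse defect measure
`m(t,ξ) = ∫_{-∞}^ξ (1_{u₀>ζ} - f(t,ζ)) dζ`. -/
theorem stmt_9
    (ν : Measure ℝ) [IsProbabilityMeasure ν] (hmom : Integrable (fun ξ : ℝ => |ξ|) ν)
    (f₀ : ℝ → ℝ) (hf₀ : ∀ ξ, f₀ ξ = (ν (Ioi ξ)).toReal)
    (u₀ : ℝ) (hu₀ : u₀ = ∫ ξ : ℝ, (f₀ ξ - if (0:ℝ) > ξ then 1 else 0))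
    (f : ℝ → ℝ → ℝ)
    (hf : ∀ t ξ, f t ξ = exp (-t) * f₀ ξ + (1 - exp (-t)) * (if u₀ > ξ then (1:ℝ) else 0)) :
    ∀ t ξ : ℝ, 0 ≤ t →
      0 ≤ ∫ ζ in Iic ξ, ((if u₀ > ζ then (1:ℝ) else 0) - f t ζ) := by
  intro t ξ ht
  have hInt : Integrable (fun ζ : ℝ => f₀ ζ - if (0:ℝ) > ζ then 1 else 0) := by
    have := h_int ν hmom
    apply this.congr
    exact Filter.Eventually.of_forall fun ζ => by simp only [hf₀ ζ]
  set G : ℝ → ℝ := fun ζ => (if u₀ > ζ then (1:ℝ) else 0) - f₀ ζ with hG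
  have hGeq : G = fun ζ =>
      ((if u₀ > ζ then (1:ℝ) else 0) - (if (0:ℝ) > ζ then 1 else 0))
        - (f₀ ζ - if (0:ℝ) > ζ then 1 else 0) := by
    funext ζ; simp only [hG]; ring
  have hGInt : Integrable G := by rw [hGeq]; exact (step_int u₀).sub hInt
  have hGtot : ∫ ζ, G ζ = 0 := by
    rw [hGeq, integral_sub (step_int u₀) hInt, step_integral u₀, ← hu₀, sub_self]
  have hf₀le : ∀ ζ, f₀ ζ ≤ 1 := fun ζ => by
    rw [hf₀]
    calc (ν (Ioi ζ)).toReal ≤ (ν univ).toReal :=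
          ENNReal.toReal_mono (measure_ne_top ν _) (measure_mono (subset_univ _))
      _ = 1 := by simp
  have hf₀nn : ∀ ζ, 0 ≤ f₀ ζ := fun ζ => by rw [hf₀]; exact ENNReal.toReal_nonneg
  have hGnonpos : ∀ ζ, u₀ < ζ → G ζ ≤ 0 := by
    intro ζ hζ
    have h2 : ¬ (u₀ > ζ) := not_lt.mpr hζ.le
    simp only [hG, h2, if_false]
    linarith [hf₀nn ζ]
  have hM : ∀ ξ' : ℝ, 0 ≤ ∫ ζ in Iic ξ', G ζ := by
    intro ξ'
    rcases le_or_gt ξ' u₀ with hle | hgt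
    · apply setIntegral_nonneg_ae measurableSet_Iic
      have hne : ∀ᵐ ζ : ℝ, ζ ≠ u₀ := by
        rw [ae_iff]
        simp
      filter_upwards [hne] with ζ hζne hζ
      have hlt : ζ < u₀ := lt_of_le_of_ne (le_trans hζ hle) hζne
      simp only [hG, hlt, if_true]
      linarith [hf₀le ζ]
    · set b : ℝ := max ξ' 0 with hbdef
      have hξb : ξ' ≤ b := le_max_left _ _
      have hub : u₀ < b := lt_of_lt_of_le hgt hξb
      have hMb : 0 ≤ ∫ ζ in Iic b, G ζ := by
        have hsplit : (∫ ζ in Iic b, G ζ) + ∫ ζ in Ioi b, G ζ = ∫ ζ, G ζ :=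
          intervalIntegral.integral_Iic_add_Ioi hGInt.integrableOn hGInt.integrableOn
        have hIoi : ∫ ζ in Ioi b, G ζ ≤ 0 :=
          setIntegral_nonpos measurableSet_Ioi fun ζ hζ => hGnonpos ζ (lt_trans hub hζ)
        rw [hGtot] at hsplit
        linarith
      have hsub : (∫ ζ in Iic b, G ζ) - ∫ ζ in Iic ξ', G ζ = ∫ ζ in ξ'..b, G ζ :=
        intervalIntegral.integral_Iic_sub_Iic hGInt.integrableOn hGInt.integrableOn
      have hIoc : ∫ ζ in ξ'..b, G ζ ≤ 0 := by
        rw [intervalIntegral.integral_of_le hξb]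
        exact setIntegral_nonpos measurableSet_Ioc fun ζ hζ => hGnonpos ζ (lt_trans hgt hζ.1)
      linarith
  have hred : (fun ζ : ℝ => (if u₀ > ζ then (1:ℝ) else 0) - f t ζ)
      = fun ζ => exp (-t) * G ζ := by
    funext ζ; rw [hf]; simp only [hG]; ring
  rw [hred, integral_const_mul]
  exact mul_nonneg (exp_pos _).le (hM ξ)
end

section
/- Let $\nu$ be a Borel probability measure on $\mathbb{R}$ with finite first moment, $f_0(\xi) = \nu((\xi,+\infty))$, $u_0 = \int_{\mathbb{R}}(f_0(\xi) - \mathbf{1}_{0>\xi})\,d\xi$, and $f(t,\xi) = e^{-t}f_0(\xi) + (1-e^{-t})\mathbf{1}_{u_0>\xi}$. Then for all $\tau > t \geq 0$ and all $\xi \in \mathbb{R}$, $\int_{-\infty}^{\xi} \left( f(\tau,\zeta) - f(t,\zeta) \right) d\zeta \geq 0$. -/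
open MeasureTheory Set Real
open scoped ENNReal NNReal

/-- monotonicity in time of the primitives of the collapse
solution: `∫_{-∞}^ξ (f(τ) - f(t)) ≥ 0` for `τ > t ≥ 0`. -/
theorem stmt_10
    (ν : Measure ℝ) [IsProbabilityMeasure ν] (hmom : Integrable (fun ξ : ℝ => |ξ|) ν)
    (f₀ : ℝ → ℝ) (hf₀ : ∀ ξ, f₀ ξ = (ν (Ioi ξ)).toReal)
    (u₀ : ℝ) (hu₀ : u₀ = ∫ ξ : ℝ, (f₀ ξ - if (0:ℝ) > ξ then 1 else 0))
    (f : ℝ → ℝ → ℝ)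
    (hf : ∀ t ξ, f t ξ = exp (-t) * f₀ ξ + (1 - exp (-t)) * (if u₀ > ξ then (1:ℝ) else 0)) :
    ∀ t τ ξ : ℝ, 0 ≤ t → t < τ →
      0 ≤ ∫ ζ in Iic ξ, (f τ ζ - f t ζ) := by
  -- basic facts about f₀
  have hf0nn : ∀ ζ, 0 ≤ f₀ ζ := fun ζ => by rw [hf₀]; exact ENNReal.toReal_nonneg
  have hf0le : ∀ ζ, f₀ ζ ≤ 1 := fun ζ => by
    rw [hf₀]
    have h1 : ν (Ioi ζ) ≤ 1 := prob_le_one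
    calc (ν (Ioi ζ)).toReal ≤ (1 : ℝ≥0∞).toReal :=
          ENNReal.toReal_mono ENNReal.one_ne_top h1
      _ = 1 := by simp
  have hanti : Antitone f₀ := fun a b hab => by
    rw [hf₀, hf₀]
    exact ENNReal.toReal_mono (measure_ne_top ν _) (measure_mono (Ioi_subset_Ioi hab))
  have hf0meas : Measurable f₀ := hanti.measurable
  set g : ℝ → ℝ := fun ζ => (if u₀ > ζ then (1:ℝ) else 0) - f₀ ζ with hg
  set h1fun : ℝ → ℝ := fun ζ => (if u₀ > ζ then (1:ℝ) else 0) - (if (0:ℝ) > ζ then 1 else 0)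
    with hh1
  set h2fun : ℝ → ℝ := fun ζ => f₀ ζ - (if (0:ℝ) > ζ then 1 else 0) with hh2
  -- h1fun : integrable with integral u₀
  have h1both : Integrable h1fun volume ∧ ∫ ζ, h1fun ζ = u₀ := by
    rcases le_or_gt 0 u₀ with hu | hu
    · have he : h1fun = (Ico 0 u₀).indicator (fun _ => (1:ℝ)) := by
        funext ζ
        simp only [hh1, Set.indicator_apply, mem_Ico]
        rcases lt_or_ge ζ 0 with h2 | h2
        · rw [if_pos (show u₀ > ζ by linarith), if_pos h2,
            if_neg (by rintro ⟨h, _⟩; linarith)]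
          norm_num
        · rcases lt_or_ge ζ u₀ with h1 | h1
          · rw [if_pos h1, if_neg (not_lt.mpr h2), if_pos ⟨h2, h1⟩]
            norm_num
          · rw [if_neg (not_lt.mpr h1), if_neg (not_lt.mpr h2),
              if_neg (fun h => absurd h.2 (not_lt.mpr h1))]
            norm_num
      constructor
      · rw [he]
        exact ((integrableOn_const_iff).mpr (Or.inr (by
          simp [Real.volume_Ico]))).integrable_indicator measurableSet_Ico
      · rw [he, integral_indicator_const _ measurableSet_Ico]
        simp [Real.volume_Ico, ENNReal.toReal_ofReal hu, hu]
    · have he : h1fun = fun ζ => -((Ico u₀ 0).indicator (fun _ => (1:ℝ)) ζ) := by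
        funext ζ
        simp only [hh1, Set.indicator_apply, mem_Ico]
        rcases lt_or_ge ζ u₀ with h1 | h1
        · rw [if_pos h1, if_pos (show (0:ℝ) > ζ by linarith),
            if_neg (by rintro ⟨h, _⟩; linarith)]
          norm_num
        · rcases lt_or_ge ζ 0 with h2 | h2
          · rw [if_neg (not_lt.mpr h1), if_pos h2, if_pos ⟨h1, h2⟩]
            norm_num
          · rw [if_neg (not_lt.mpr h1), if_neg (not_lt.mpr h2),
              if_neg (fun h => absurd h.2 (not_lt.mpr h2))]
            norm_num
      constructor
      · rw [he]
        exact (((integrableOn_const_iff).mpr (Or.inr (by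
          simp [Real.volume_Ico]))).integrable_indicator measurableSet_Ico).neg
      · rw [he, integral_neg, integral_indicator_const _ measurableSet_Ico]
        simp only [Real.volume_Ico, zero_sub, smul_eq_mul, mul_one]
        rw [Real.volume_real_Ico_of_le hu.le]
        ring
  -- measurability of h2fun
  have hindmeas : Measurable (fun ζ : ℝ => if (0:ℝ) > ζ then (1:ℝ) else 0) := by
    apply Measurable.ite _ measurable_const measurable_const
    exact measurableSet_lt measurable_id measurable_const
  have h2meas : Measurable h2fun := hf0meas.sub hindmeas
  -- integrability of h2fun via Tonelli
  have h2int : Integrable h2fun volume := by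
    refine ⟨h2meas.aestronglyMeasurable, ?_⟩
    show ∫⁻ ζ, (‖h2fun ζ‖₊ : ℝ≥0∞) ∂volume < ⊤
    set S : Set (ℝ × ℝ) := {p | (0 ≤ p.1 ∧ p.1 < p.2) ∨ (p.2 ≤ p.1 ∧ p.1 < 0)} with hS
    have hSmeas : MeasurableSet S := by
      apply MeasurableSet.union
      · exact (measurableSet_le measurable_const measurable_fst).inter
          (measurableSet_lt measurable_fst measurable_snd)
      · exact (measurableSet_le measurable_snd measurable_fst).inter
          (measurableSet_lt measurable_fst measurable_const)
    have hpt : ∀ ζ : ℝ, (‖h2fun ζ‖₊ : ℝ≥0∞)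
        = ∫⁻ x, S.indicator (fun _ => (1:ℝ≥0∞)) (ζ, x) ∂ν := by
      intro ζ
      rcases le_or_gt 0 ζ with h | h
      · have h1 : (fun x => S.indicator (fun _ => (1:ℝ≥0∞)) (ζ, x))
            = (Ioi ζ).indicator (fun _ => (1:ℝ≥0∞)) := by
          funext x
          simp only [Set.indicator_apply, hS, mem_setOf_eq, mem_Ioi]
          have : ¬ (ζ < 0) := not_lt.mpr h
          simp [h, this]
        rw [h1, lintegral_indicator_const measurableSet_Ioi, one_mul]
        have hv : h2fun ζ = (ν (Ioi ζ)).toReal := by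
          simp [hh2, hf₀, not_lt.mpr h]
        rw [hv, ← enorm_eq_nnnorm, Real.enorm_eq_ofReal ENNReal.toReal_nonneg,
          ENNReal.ofReal_toReal (measure_ne_top ν _)]
      · have h1 : (fun x => S.indicator (fun _ => (1:ℝ≥0∞)) (ζ, x))
            = (Iic ζ).indicator (fun _ => (1:ℝ≥0∞)) := by
          funext x
          simp only [Set.indicator_apply, hS, mem_setOf_eq, mem_Iic]
          have : ¬ (0 ≤ ζ) := not_le.mpr h
          simp [h, this]
        rw [h1, lintegral_indicator_const measurableSet_Iic, one_mul]
        have hcompl : (ν (Ioi ζ)).toReal = 1 - (ν (Iic ζ)).toReal := by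
          have h2 : ν (Ioi ζ) = 1 - ν (Iic ζ) := by
            rw [← compl_Iic]
            rw [measure_compl measurableSet_Iic (measure_ne_top ν _)]
            simp
          rw [h2, ENNReal.toReal_sub_of_le prob_le_one ENNReal.one_ne_top]
          simp
        have hv : h2fun ζ = -((ν (Iic ζ)).toReal) := by
          simp only [hh2, hf₀, if_pos h, hcompl]; ring
        rw [hv, nnnorm_neg, ← enorm_eq_nnnorm, Real.enorm_eq_ofReal ENNReal.toReal_nonneg,
          ENNReal.ofReal_toReal (measure_ne_top ν _)]
    calc ∫⁻ ζ, (‖h2fun ζ‖₊ : ℝ≥0∞) ∂volume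
        = ∫⁻ ζ, ∫⁻ x, S.indicator (fun _ => (1:ℝ≥0∞)) (ζ, x) ∂ν ∂volume := by
          exact lintegral_congr hpt
      _ = ∫⁻ x, ∫⁻ ζ, S.indicator (fun _ => (1:ℝ≥0∞)) (ζ, x) ∂volume ∂ν := by
          apply lintegral_lintegral_swap
          exact ((measurable_const.indicator hSmeas)).aemeasurable
      _ = ∫⁻ x, ENNReal.ofReal |x| ∂ν := by
          apply lintegral_congr
          intro x
          rcases le_or_gt 0 x with h | h
          · have h1 : (fun ζ => S.indicator (fun _ => (1:ℝ≥0∞)) (ζ, x))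
                = (Ico 0 x).indicator (fun _ => (1:ℝ≥0∞)) := by
              funext ζ
              simp only [Set.indicator_apply, hS, mem_setOf_eq, mem_Ico]
              by_cases h1 : 0 ≤ ζ <;> by_cases h2 : ζ < x <;> simp [h1, h2] <;> intros <;> linarith
            rw [h1, lintegral_indicator_const measurableSet_Ico, one_mul,
              Real.volume_Ico, abs_of_nonneg h]
            simp
          · have h1 : (fun ζ => S.indicator (fun _ => (1:ℝ≥0∞)) (ζ, x))
                = (Ico x 0).indicator (fun _ => (1:ℝ≥0∞)) := by
              funext ζ
              simp only [Set.indicator_apply, hS, mem_setOf_eq, mem_Ico]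
              by_cases h1 : x ≤ ζ <;> by_cases h2 : ζ < 0 <;> simp [h1, h2] <;> intros <;> linarith
            rw [h1, lintegral_indicator_const measurableSet_Ico, one_mul,
              Real.volume_Ico, abs_of_neg h]
            norm_num
      _ < ⊤ := by
          have h9 : ∫⁻ x, (‖|x|‖₊ : ℝ≥0∞) ∂ν < ⊤ := hmom.hasFiniteIntegral
          have h10 : (fun x : ℝ => ENNReal.ofReal |x|)
              = fun x : ℝ => (‖|x|‖₊ : ℝ≥0∞) := by
            funext x
            rw [← enorm_eq_nnnorm, Real.enorm_eq_ofReal (abs_nonneg x)]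
          rw [h10]
          exact h9
  -- g is integrable with integral 0
  have hgeq : g = fun ζ => h1fun ζ - h2fun ζ := by
    funext ζ; simp only [hg, hh1, hh2]; ring
  have hgint : Integrable g volume := by rw [hgeq]; exact h1both.1.sub h2int
  have hgzero : ∫ ζ, g ζ = 0 := by
    rw [hgeq, integral_sub h1both.1 h2int, h1both.2, ← hu₀]
    simp
  -- key: the primitive of g is nonnegative
  have key : ∀ ξ : ℝ, 0 ≤ ∫ ζ in Iic ξ, g ζ := by
    intro ξ
    rcases le_or_gt ξ u₀ with hle | hlt
    · have h0 : ∀ᵐ ζ : ℝ, ζ ≠ u₀ := by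
        rw [ae_iff]
        simpa using Real.volume_singleton (x := u₀)
      apply setIntegral_nonneg_ae measurableSet_Iic
      filter_upwards [h0] with ζ hζ hmem
      have hζu : ζ < u₀ := lt_of_le_of_ne (le_trans hmem hle) hζ
      simp only [hg, if_pos hζu]
      linarith [hf0le ζ]
    · have hsplit := integral_add_compl measurableSet_Iic hgint (f := g) (s := Iic ξ)
      rw [compl_Iic, hgzero] at hsplit
      have h3 : ∫ ζ in Ioi ξ, g ζ ≤ 0 := by
        apply setIntegral_nonpos measurableSet_Ioi
        intro ζ hζ
        have : ¬ (u₀ > ζ) := by simp only [mem_Ioi] at hζ; linarith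
        simp only [hg, if_neg this]
        linarith [hf0nn ζ]
      linarith
  -- conclude
  intro t τ ξ ht htτ
  have hfd : ∀ ζ, f τ ζ - f t ζ = (exp (-t) - exp (-τ)) * g ζ := by
    intro ζ; simp only [hf, hg]; ring
  calc (0:ℝ) ≤ (exp (-t) - exp (-τ)) * ∫ ζ in Iic ξ, g ζ := by
        apply mul_nonneg _ (key ξ)
        have : exp (-τ) ≤ exp (-t) := Real.exp_le_exp.mpr (by linarith)
        linarith
    _ = ∫ ζ in Iic ξ, (exp (-t) - exp (-τ)) * g ζ := (integral_const_mul _ _).symm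
    _ = ∫ ζ in Iic ξ, (f τ ζ - f t ζ) := by
        apply integral_congr_ae
        filter_upwards with ζ
        rw [hfd]
end
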